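/- arXiv:1308.1269 — 5 statements merged into one kernel-verified Lean document; each statement's English description precedes it below -/
import Mathlib

section
/- Let (a_i)_{i≥1} and (b_i)_{i≥1} be sequences of non-negative, non-increasing real numbers such that there exists i* ∈ ℕ with a_i ≤ b_i for all i ≤ i* and a_i ≥ b_i for all i > i*. If ∑_{i=1}^∞ a_i = ∑_{i=1}^∞ b_i < ∞, then for every real number m ≥ 1, ∑_{i=1}^∞ a_i^m ≤ ∑_{i=1}^∞ b_i^m. -/
open Real

/-- Tangent line inequality: `y^m ≥ x^m + m x^(m-1) (y - x)` for `x,y ≥ 0`, `m ≥ 1`. -/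
lemma tangent_rpow {x y m : ℝ} (hx : 0 ≤ x) (hy : 0 ≤ y) (hm : 1 ≤ m) :
    x ^ m + m * x ^ (m - 1) * (y - x) ≤ y ^ m := by
  rcases eq_or_lt_of_le hx with hx0 | hxpos
  · rcases eq_or_lt_of_le hm with hm1 | hm1
    · simp [← hx0, ← hm1, Real.rpow_one]
    · rw [← hx0]
      rw [Real.zero_rpow (by linarith), Real.zero_rpow (by linarith)]
      simpa using Real.rpow_nonneg hy m
  · have hs : -1 ≤ (y - x) / x := by
      rw [le_div_iff₀ hxpos]; nlinarith
    have hB := one_add_mul_self_le_rpow_one_add hs hm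
    have h1 : 1 + (y - x) / x = y / x := by field_simp; ring
    rw [h1, Real.div_rpow hy hxpos.le] at hB
    have hxm : (0:ℝ) < x ^ m := Real.rpow_pos_of_pos hxpos m
    have hB' : (1 + m * ((y - x) / x)) * x ^ m ≤ y ^ m := (le_div_iff₀ hxm).mp hB
    have hkey : x ^ (m - 1) = x ^ m / x := by
      rw [Real.rpow_sub hxpos, Real.rpow_one]
    calc x ^ m + m * x ^ (m - 1) * (y - x)
        = (1 + m * ((y - x) / x)) * x ^ m := by rw [hkey]; field_simp
      _ ≤ y ^ m := hB'

/-- Lemma 4(i) (Schur-majorisation inequality for powers of crossing sequences).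
Sequences are indexed by `ℕ` (standing for the positive integers). -/
theorem stmt_14 (a b : ℕ → ℝ)
    (ha0 : ∀ i, 0 ≤ a i) (hb0 : ∀ i, 0 ≤ b i)
    (hamono : ∀ i, a (i + 1) ≤ a i) (hbmono : ∀ i, b (i + 1) ≤ b i)
    (istar : ℕ)
    (hcross₁ : ∀ i ≤ istar, a i ≤ b i) (hcross₂ : ∀ i > istar, b i ≤ a i)
    (hsa : Summable a) (hsb : Summable b)
    (hsum : ∑' i, a i = ∑' i, b i)
    (m : ℝ) (hm : 1 ≤ m) :
    ∑' i, a i ^ m ≤ ∑' i, b i ^ m := by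
  have hm0 : (0:ℝ) < m := by linarith
  have hm1 : (0:ℝ) ≤ m - 1 := by linarith
  have haanti : Antitone a := antitone_nat_of_succ_le hamono
  have hbanti : Antitone b := antitone_nat_of_succ_le hbmono
  -- summability of powers
  have key : ∀ (c : ℕ → ℝ), (∀ i, 0 ≤ c i) → Antitone c → Summable c →
      Summable (fun i => c i ^ m) := by
    intro c hc0 hcanti hsc
    refine Summable.of_nonneg_of_le (f := fun i => c 0 ^ (m - 1) * c i)
      (fun i => Real.rpow_nonneg (hc0 i) m) ?_ (hsc.mul_left _)
    intro i
    rcases eq_or_lt_of_le (hc0 i) with h0 | hpos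
    · rw [← h0, Real.zero_rpow (by linarith : m ≠ 0)]
      exact mul_nonneg (Real.rpow_nonneg (hc0 0) _) le_rfl
    · have h5 : c i ^ m = c i ^ (m - 1) * c i := by
        have := Real.rpow_add hpos (m - 1) 1
        rw [Real.rpow_one] at this
        rw [← this]
        norm_num
      rw [h5]
      have := Real.rpow_le_rpow (hc0 i) (hcanti (Nat.zero_le i)) hm1
      exact mul_le_mul_of_nonneg_right this (hc0 i)
  have hsam := key a ha0 haanti hsa
  have hsbm := key b hb0 hbanti hsb
  set K : ℝ := a (istar + 1) ^ (m - 1) with hK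
  have hK0 : 0 ≤ K := Real.rpow_nonneg (ha0 _) _
  have hpt : ∀ i, a i ^ m ≤ b i ^ m + (m * K) * (a i - b i) := by
    intro i
    have htan := tangent_rpow (ha0 i) (hb0 i) hm
    have h2 : m * a i ^ (m - 1) * (a i - b i) ≤ m * K * (a i - b i) := by
      rcases le_or_gt i istar with hi | hi
      · have hd : a i - b i ≤ 0 := by linarith [hcross₁ i hi]
        have hKle : K ≤ a i ^ (m - 1) :=
          Real.rpow_le_rpow (ha0 _) (haanti (by omega)) hm1
        have h3 : (a i ^ (m - 1) - K) * (a i - b i) ≤ 0 :=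
          mul_nonpos_of_nonneg_of_nonpos (by linarith) hd
        nlinarith [mul_le_mul_of_nonneg_left h3 hm0.le]
      · have hd : 0 ≤ a i - b i := by linarith [hcross₂ i hi]
        have hKge : a i ^ (m - 1) ≤ K :=
          Real.rpow_le_rpow (ha0 _) (haanti (by omega)) hm1
        have h3 : 0 ≤ (K - a i ^ (m - 1)) * (a i - b i) :=
          mul_nonneg (by linarith) hd
        nlinarith [mul_le_mul_of_nonneg_left h3 hm0.le]
    linarith
  have hsub : Summable (fun i => (m * K) * (a i - b i)) := (hsa.sub hsb).mul_left _
  calc ∑' i, a i ^ m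
      ≤ ∑' i, (b i ^ m + (m * K) * (a i - b i)) := Summable.tsum_le_tsum hpt hsam (hsbm.add hsub)
    _ = ∑' i, b i ^ m := by
        rw [Summable.tsum_add hsbm hsub, tsum_mul_left, Summable.tsum_sub hsa hsb, hsum, sub_self,
          mul_zero, add_zero]
end

section
/- Let (a_i)_{i≥1} and (b_i)_{i≥1} be sequences of non-negative, non-increasing real numbers such that there exists i* ∈ ℕ with a_i ≤ b_i for all i ≤ i* and a_i ≥ b_i for all i > i*. Let (c_i)_{i≥1} be a sequence of non-negative, non-decreasing real numbers. If ∑_{i=1}^∞ b_i ≤ ∑_{i=1}^∞ a_i < ∞ and both ∑_{i=1}^∞ c_i a_i < ∞ and ∑_{i=1}^∞ c_i b_i < ∞, then ∑_{i=1}^∞ c_i a_i ≥ ∑_{i=1}^∞ c_i b_i. -/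
/-- Lemma 4(ii) (rearrangement-type inequality for crossing sequences against
non-decreasing weights). Sequences are indexed by `ℕ` (standing for the positive
integers). -/
theorem stmt_15 (a b c : ℕ → ℝ)
    (ha0 : ∀ i, 0 ≤ a i) (hb0 : ∀ i, 0 ≤ b i) (hc0 : ∀ i, 0 ≤ c i)
    (hamono : ∀ i, a (i + 1) ≤ a i) (hbmono : ∀ i, b (i + 1) ≤ b i)
    (hcmono : ∀ i, c i ≤ c (i + 1))
    (istar : ℕ)
    (hcross₁ : ∀ i ≤ istar, a i ≤ b i) (hcross₂ : ∀ i > istar, b i ≤ a i)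
    (hsa : Summable a) (hsb : Summable b)
    (hba : ∑' i, b i ≤ ∑' i, a i)
    (hsca : Summable (fun i => c i * a i)) (hscb : Summable (fun i => c i * b i)) :
    ∑' i, c i * b i ≤ ∑' i, c i * a i := by
  have hc : Monotone c := monotone_nat_of_le_succ hcmono
  have hsab : Summable (fun i => a i - b i) := hsa.sub hsb
  have hs1 : Summable (fun i => c istar * (a i - b i)) := hsab.mul_left _
  have hs2 : Summable (fun i => c i * (a i - b i)) := by
    have : (fun i => c i * (a i - b i)) = fun i => c i * a i - c i * b i := by
      funext i; ring
    rw [this]; exact hsca.sub hscb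
  have key : ∀ i, c istar * (a i - b i) ≤ c i * (a i - b i) := by
    intro i
    rcases le_or_gt i istar with h | h
    · exact mul_le_mul_of_nonpos_right (hc h) (sub_nonpos.mpr (hcross₁ i h))
    · exact mul_le_mul_of_nonneg_right (hc h.le) (sub_nonneg.mpr (hcross₂ i h))
  have h1 : c istar * (∑' i, (a i - b i)) ≤ ∑' i, c i * (a i - b i) := by
    rw [← tsum_mul_left]
    exact Summable.tsum_le_tsum key hs1 hs2
  have h2 : (0:ℝ) ≤ ∑' i, (a i - b i) := by
    rw [Summable.tsum_sub hsa hsb]; linarith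
  have h3 : ∑' i, c i * (a i - b i) = (∑' i, c i * a i) - ∑' i, c i * b i := by
    rw [← Summable.tsum_sub hsca hscb]
    congr 1; funext i; ring
  nlinarith [mul_nonneg (hc0 istar) h2]
end

section
/- Let p, q be integers with 1 ≤ q ≤ p and let m ≥ 1 be a real number. Then (q/p)^{m−1} ≥ ∑_{ℓ=1}^p ( C(p−ℓ, q−1)/C(p, q) )^m ≥ (q/p)^m / (1 − (1 − q/p)^m). -/
open Finset



private lemma nat_partial (p q : ℕ) (hq : 1 ≤ q) :
    ∀ k, k ≤ p → (p - k).choose q + ∑ ℓ ∈ Finset.Icc 1 k, (p - ℓ).choose (q - 1) = p.choose q := by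
  intro k
  induction k with
  | zero => simp
  | succ k ih =>
    intro hk
    rw [Finset.sum_Icc_succ_top (by omega : 1 ≤ k + 1)]
    have H := ih (by omega)
    have key : (p - k).choose q = (p - (k+1)).choose (q-1) + (p-(k+1)).choose q := by
      have h1 : p - k = (p - (k+1)) + 1 := by omega
      have h2 : q = (q - 1) + 1 := by omega
      conv_lhs => rw [h1, h2]
      rw [Nat.choose_succ_succ]; congr 2; omega
    omega

private lemma nat_step (p q n : ℕ) (hq : 1 ≤ q) (hn : n ≤ p) :
    (n - 1).choose q * p ≤ n.choose q * (p - q) := by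
  rcases Nat.eq_zero_or_pos n with rfl | hn1
  · simp [Nat.choose_eq_zero_of_lt hq]
  rcases le_or_gt q n with hqn | hqn
  swap
  · rw [Nat.choose_eq_zero_of_lt (by omega : n - 1 < q)]
    simp
  have key : (n - 1).choose q * n = n.choose q * (n - q) := by
    have h := Nat.choose_mul_succ_eq (n - 1) q
    rw [show n - 1 + 1 = n by omega] at h; omega
  have hineq : (n - q) * p ≤ (p - q) * n := by
    rw [Nat.sub_mul, Nat.sub_mul]
    have h1 : q * n ≤ q * p := Nat.mul_le_mul_left q hn
    have h2 : n * p = p * n := by ring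
    omega
  have main : ((n - 1).choose q * p) * n ≤ (n.choose q * (p - q)) * n := by
    calc ((n - 1).choose q * p) * n = ((n - 1).choose q * n) * p := by ring
    _ = (n.choose q * (n - q)) * p := by rw [key]
    _ = n.choose q * ((n - q) * p) := by ring
    _ ≤ n.choose q * ((p - q) * n) := Nat.mul_le_mul_left _ hineq
    _ = (n.choose q * (p - q)) * n := by ring
  exact Nat.le_of_mul_le_mul_right main hn1

private lemma nat_major (p q : ℕ) (hq : 1 ≤ q) (hqp : q ≤ p) :
    ∀ k, (p - k).choose q * p ^ k ≤ p.choose q * (p - q) ^ k := by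
  intro k
  induction k with
  | zero => simp
  | succ k ih =>
    have h1 : p - (k + 1) = (p - k) - 1 := by omega
    calc (p - (k + 1)).choose q * p ^ (k + 1)
        = (((p - k) - 1).choose q * p) * p ^ k := by rw [h1]; ring
      _ ≤ ((p - k).choose q * (p - q)) * p ^ k :=
          Nat.mul_le_mul_right _ (nat_step p q (p - k) hq (by omega))
      _ = ((p - k).choose q * p ^ k) * (p - q) := by ring
      _ ≤ (p.choose q * (p - q) ^ k) * (p - q) := Nat.mul_le_mul_right _ ih
      _ = p.choose q * (p - q) ^ (k + 1) := by ring

private lemma conv_ineq {x y m : ℝ} (hx : 0 ≤ x) (hy : 0 ≤ y) (hm : 1 ≤ m) :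
    y ^ m + m * y ^ (m - 1) * (x - y) ≤ x ^ m := by
  rcases eq_or_lt_of_le hy with hy0 | hy0
  · rcases eq_or_lt_of_le hm with hm1 | hm1
    · rw [← hm1, ← hy0]
      simp [Real.rpow_one, Real.rpow_zero]
    · rw [← hy0, Real.zero_rpow (by positivity : m ≠ 0),
        Real.zero_rpow (by intro h; nlinarith [sub_eq_zero.mp h] : m - 1 ≠ 0)]
      simp only [mul_zero, zero_mul, add_zero, zero_add]
      exact Real.rpow_nonneg hx m
  · have hs : -1 ≤ x / y - 1 := by
      have : 0 ≤ x / y := div_nonneg hx hy0.le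
      linarith
    have B := one_add_mul_self_le_rpow_one_add hs hm
    rw [show (1 : ℝ) + (x / y - 1) = x / y by ring] at B
    have hym : (0 : ℝ) < y ^ m := Real.rpow_pos_of_pos hy0 m
    have hymm : y ^ m = y ^ (m - 1) * y := by
      rw [← Real.rpow_add_one (ne_of_gt hy0)]
      ring_nf
    have hx' : (x / y) ^ m * y ^ m = x ^ m := by
      rw [← Real.mul_rpow (div_nonneg hx hy0.le) hy]
      rw [div_mul_cancel₀ x (ne_of_gt hy0)]
    calc y ^ m + m * y ^ (m - 1) * (x - y)
        = (1 + m * (x / y - 1)) * y ^ m := by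
          rw [hymm]; field_simp
      _ ≤ (x / y) ^ m * y ^ m := mul_le_mul_of_nonneg_right B hym.le
      _ = x ^ m := hx'

private lemma abel_nonneg (c d : ℕ → ℝ) (hc : ∀ n, 0 ≤ c n)
    (hmono : ∀ n, c (n + 1) ≤ c n)
    (hD : ∀ k, 0 ≤ ∑ ℓ ∈ Finset.Icc 1 k, d ℓ) (N : ℕ) :
    0 ≤ ∑ ℓ ∈ Finset.Icc 1 N, c ℓ * d ℓ := by
  have key : ∀ M, c M * ∑ ℓ ∈ Finset.Icc 1 M, d ℓ ≤ ∑ ℓ ∈ Finset.Icc 1 M, c ℓ * d ℓ := by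
    intro M
    induction M with
    | zero => simp
    | succ M ih =>
      rw [Finset.sum_Icc_succ_top (by omega : 1 ≤ M + 1),
        Finset.sum_Icc_succ_top (by omega : 1 ≤ M + 1)]
      have h1 : c (M + 1) * ∑ ℓ ∈ Finset.Icc 1 M, d ℓ ≤ c M * ∑ ℓ ∈ Finset.Icc 1 M, d ℓ :=
        mul_le_mul_of_nonneg_right (hmono M) (hD M)
      calc c (M + 1) * (∑ ℓ ∈ Finset.Icc 1 M, d ℓ + d (M + 1))
          = c (M + 1) * ∑ ℓ ∈ Finset.Icc 1 M, d ℓ + c (M + 1) * d (M + 1) := by ring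
        _ ≤ ∑ ℓ ∈ Finset.Icc 1 M, c ℓ * d ℓ + c (M + 1) * d (M + 1) := by linarith
  exact le_trans (mul_nonneg (hc N) (hD N)) (key N)


/-- Lemma 5 (bounds for power sums of the hypergeometric-type weights);
the powers are real powers. -/
theorem stmt_16 (p q : ℕ) (hq : 1 ≤ q) (hqp : q ≤ p) (m : ℝ) (hm : 1 ≤ m) :
    (∑ ℓ ∈ Finset.Icc 1 p, (((p - ℓ).choose (q - 1) : ℝ) / (p.choose q : ℝ)) ^ m
      ≤ ((q : ℝ) / p) ^ (m - 1)) ∧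
    (((q : ℝ) / p) ^ m / (1 - (1 - (q : ℝ) / p) ^ m)
      ≤ ∑ ℓ ∈ Finset.Icc 1 p, (((p - ℓ).choose (q - 1) : ℝ) / (p.choose q : ℝ)) ^ m) := by
  have hp : 1 ≤ p := le_trans hq hqp
  have hp0 : (0:ℝ) < p := by exact_mod_cast hp
  have hC0 : (0:ℝ) < (p.choose q : ℝ) := by exact_mod_cast Nat.choose_pos hqp
  set Q : ℝ := (q:ℝ) / p with hQdef
  set r : ℝ := 1 - Q with hrdef
  have hQpos : 0 < Q := div_pos (by exact_mod_cast hq) hp0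
  have hQ1 : Q ≤ 1 := by rw [hQdef, div_le_one hp0]; exact_mod_cast hqp
  have hr0 : 0 ≤ r := by rw [hrdef]; linarith
  have hr1 : r < 1 := by rw [hrdef]; linarith
  have hm0 : (0:ℝ) < m := lt_of_lt_of_le one_pos hm
  set a : ℕ → ℝ := fun ℓ => if ℓ ≤ p then ((p - ℓ).choose (q-1) : ℝ) / (p.choose q : ℝ) else 0
    with hadef
  set b : ℕ → ℝ := fun ℓ => Q * r ^ (ℓ - 1) with hbdef
  have ha0 : ∀ ℓ, 0 ≤ a ℓ := by
    intro ℓ; simp only [hadef]; split <;> positivity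
  have hb0 : ∀ ℓ, 0 ≤ b ℓ := fun ℓ => mul_nonneg hQpos.le (pow_nonneg hr0 _)
  have hsum_eq : ∑ ℓ ∈ Finset.Icc 1 p, (((p - ℓ).choose (q - 1) : ℝ) / (p.choose q : ℝ)) ^ m
      = ∑ ℓ ∈ Finset.Icc 1 p, (a ℓ) ^ m := by
    apply Finset.sum_congr rfl
    intro ℓ hℓ
    simp only [hadef]
    rw [if_pos (Finset.mem_Icc.mp hℓ).2]
  have hsumA : ∀ k, k ≤ p →
      ∑ ℓ ∈ Finset.Icc 1 k, a ℓ = 1 - ((p - k).choose q : ℝ) / (p.choose q : ℝ) := by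
    intro k hk
    have hN := nat_partial p q hq k hk
    have hN' := congrArg (fun n : ℕ => (n:ℝ)) hN
    push_cast at hN'
    have h1 : ∑ ℓ ∈ Finset.Icc 1 k, a ℓ
        = ∑ ℓ ∈ Finset.Icc 1 k, ((p - ℓ).choose (q-1) : ℝ) / (p.choose q : ℝ) := by
      apply Finset.sum_congr rfl; intro ℓ hℓ
      simp only [hadef]; rw [if_pos (le_trans (Finset.mem_Icc.mp hℓ).2 hk)]
    rw [h1, ← Finset.sum_div, eq_sub_iff_add_eq, ← add_div,
      div_eq_one_iff_eq (ne_of_gt hC0)]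
    linarith
  have hsum1 : ∑ ℓ ∈ Finset.Icc 1 p, a ℓ = 1 := by
    rw [hsumA p le_rfl, Nat.sub_self, Nat.choose_eq_zero_of_lt hq]
    simp
  have hQr : Q = 1 - r := by rw [hrdef]; ring
  have hsumB : ∀ k, ∑ ℓ ∈ Finset.Icc 1 k, b ℓ = 1 - r ^ k := by
    intro k; induction k with
    | zero => simp
    | succ k ih =>
      rw [Finset.sum_Icc_succ_top (by omega : 1 ≤ k+1), ih]
      have hb : b (k+1) = Q * r ^ k := by simp [hbdef]
      rw [hb, hQr]; ring
  have hmaj : ∀ k, k ≤ p → ((p - k).choose q : ℝ) / (p.choose q : ℝ) ≤ r ^ k := by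
    intro k hk
    have hN : (((p-k).choose q * p^k : ℕ) : ℝ) ≤ ((p.choose q * (p-q)^k : ℕ) : ℝ) := by
      exact_mod_cast nat_major p q hq hqp k
    push_cast [Nat.cast_sub hqp] at hN
    have hrq : r = ((p:ℝ) - q) / p := by rw [hrdef, hQdef]; field_simp
    rw [hrq, div_pow, div_le_div_iff₀ hC0 (pow_pos hp0 k)]
    linarith
  have hD : ∀ k, 0 ≤ ∑ ℓ ∈ Finset.Icc 1 k, (a ℓ - b ℓ) := by
    intro k
    rw [Finset.sum_sub_distrib, hsumB]
    rcases le_or_gt k p with hk | hk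
    · rw [hsumA k hk]
      linarith [hmaj k hk]
    · have hsub : ∑ ℓ ∈ Finset.Icc 1 k, a ℓ = ∑ ℓ ∈ Finset.Icc 1 p, a ℓ := by
        symm
        apply Finset.sum_subset (Finset.Icc_subset_Icc_right hk.le)
        intro ℓ hℓ hℓ'
        simp only [Finset.mem_Icc] at hℓ hℓ'
        simp only [hadef]
        rw [if_neg (by omega)]
      rw [hsub, hsum1]
      have : (0:ℝ) ≤ r ^ k := pow_nonneg hr0 k
      linarith
  have haQ : ∀ ℓ, 1 ≤ ℓ → a ℓ ≤ Q := by
    intro ℓ hℓ1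
    simp only [hadef]
    split
    case isTrue h =>
      rw [hQdef, div_le_div_iff₀ hC0 hp0]
      have hid : p * (p-1).choose (q-1) = p.choose q * q := by
        have h2 := Nat.add_one_mul_choose_eq (p-1) (q-1)
        rwa [show p-1+1 = p by omega, show q-1+1 = q by omega] at h2
      have hid' := congrArg (fun n : ℕ => (n:ℝ)) hid
      push_cast at hid'
      have hle : ((p - ℓ).choose (q-1) : ℝ) ≤ ((p-1).choose (q-1) : ℝ) := by
        exact_mod_cast Nat.choose_le_choose (q-1) (by omega : p - ℓ ≤ p - 1)
      calc ((p - ℓ).choose (q-1) : ℝ) * p ≤ ((p-1).choose (q-1) : ℝ) * p :=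
            mul_le_mul_of_nonneg_right hle hp0.le
        _ = (q:ℝ) * (p.choose q : ℝ) := by linarith
    case isFalse => exact hQpos.le
  -- upper bound
  have key_up : ∀ x : ℝ, 0 ≤ x → x ≤ Q → x ^ m ≤ Q ^ (m-1) * x := by
    intro x hx hxQ
    have h1 : x ^ m = x ^ (m-1) * x := by
      have h2 := Real.rpow_add' hx (show m - 1 + 1 ≠ 0 by linarith)
      rw [show m - 1 + 1 = m by ring] at h2
      rw [h2, Real.rpow_one]
    rw [h1]
    exact mul_le_mul_of_nonneg_right (Real.rpow_le_rpow hx hxQ (by linarith)) hx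
  have upper : ∑ ℓ ∈ Finset.Icc 1 p, a ℓ ^ m ≤ Q ^ (m-1) := by
    calc ∑ ℓ ∈ Finset.Icc 1 p, a ℓ ^ m ≤ ∑ ℓ ∈ Finset.Icc 1 p, Q ^ (m-1) * a ℓ :=
          Finset.sum_le_sum fun ℓ hmem => key_up _ (ha0 ℓ) (haQ ℓ (Finset.mem_Icc.mp hmem).1)
      _ = Q ^ (m-1) * ∑ ℓ ∈ Finset.Icc 1 p, a ℓ := by rw [Finset.mul_sum]
      _ = Q ^ (m-1) := by rw [hsum1, mul_one]
  -- lower bound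
  have hbm : ∀ ℓ, b ℓ ^ m = Q ^ m * (r ^ m) ^ (ℓ - 1) := by
    intro ℓ
    simp only [hbdef]
    rw [Real.mul_rpow hQpos.le (pow_nonneg hr0 _)]
    congr 1
    rw [← Real.rpow_natCast r (ℓ-1), ← Real.rpow_mul hr0, mul_comm, Real.rpow_mul hr0,
      Real.rpow_natCast]
  have conv_step : ∀ N, p ≤ N →
      ∑ ℓ ∈ Finset.Icc 1 N, b ℓ ^ m ≤ ∑ ℓ ∈ Finset.Icc 1 p, a ℓ ^ m := by
    intro N hN
    have hext : ∑ ℓ ∈ Finset.Icc 1 p, a ℓ ^ m = ∑ ℓ ∈ Finset.Icc 1 N, a ℓ ^ m := by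
      apply Finset.sum_subset (Finset.Icc_subset_Icc_right hN)
      intro ℓ hℓ hℓ'
      simp only [Finset.mem_Icc] at hℓ hℓ'
      have hz : a ℓ = 0 := by simp only [hadef]; rw [if_neg (by omega)]
      rw [hz, Real.zero_rpow (by positivity : m ≠ 0)]
    rw [hext]
    have step1 : ∑ ℓ ∈ Finset.Icc 1 N, (b ℓ ^ m + m * b ℓ ^ (m-1) * (a ℓ - b ℓ))
        ≤ ∑ ℓ ∈ Finset.Icc 1 N, a ℓ ^ m :=
      Finset.sum_le_sum fun ℓ _ => conv_ineq (ha0 ℓ) (hb0 ℓ) hm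
    have step2 : 0 ≤ ∑ ℓ ∈ Finset.Icc 1 N, b ℓ ^ (m-1) * (a ℓ - b ℓ) := by
      apply abel_nonneg
      · intro n; exact Real.rpow_nonneg (hb0 n) _
      · intro n
        apply Real.rpow_le_rpow (hb0 (n+1)) _ (by linarith)
        simp only [hbdef]
        apply mul_le_mul_of_nonneg_left _ hQpos.le
        simp only [Nat.add_sub_cancel]
        exact pow_le_pow_of_le_one hr0 hr1.le (Nat.sub_le n 1)
      · exact hD
    have expand : ∑ ℓ ∈ Finset.Icc 1 N, (b ℓ ^ m + m * b ℓ ^ (m-1) * (a ℓ - b ℓ))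
        = ∑ ℓ ∈ Finset.Icc 1 N, b ℓ ^ m
          + m * ∑ ℓ ∈ Finset.Icc 1 N, b ℓ ^ (m-1) * (a ℓ - b ℓ) := by
      rw [Finset.sum_add_distrib, Finset.mul_sum]
      congr 1
      apply Finset.sum_congr rfl
      intro ℓ _; ring
    have hms : 0 ≤ m * ∑ ℓ ∈ Finset.Icc 1 N, b ℓ ^ (m-1) * (a ℓ - b ℓ) :=
      mul_nonneg hm0.le step2
    linarith
  have hgeom : ∀ N, ∑ ℓ ∈ Finset.Icc 1 N, b ℓ ^ m
      = Q ^ m * ∑ j ∈ Finset.range N, (r ^ m) ^ j := by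
    intro N
    have h1 : ∑ ℓ ∈ Finset.Icc 1 N, b ℓ ^ m = ∑ j ∈ Finset.range N, b (1 + j) ^ m := by
      rw [← Finset.Ico_add_one_right_eq_Icc, Finset.sum_Ico_eq_sum_range]
      simp
    rw [h1, Finset.mul_sum]
    apply Finset.sum_congr rfl
    intro j _
    rw [hbm (1 + j), Nat.add_sub_cancel_left]
  have hsm : r ^ m < 1 := Real.rpow_lt_one hr0 hr1 hm0
  have hsm0 : (0:ℝ) ≤ r ^ m := Real.rpow_nonneg hr0 m
  have htends : Filter.Tendsto (fun N => Q ^ m * ∑ j ∈ Finset.range N, (r ^ m) ^ j)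
      Filter.atTop (nhds (Q ^ m * (1 - r ^ m)⁻¹)) :=
    ((hasSum_geometric_of_lt_one hsm0 hsm).tendsto_sum_nat).const_mul _
  have lower : Q ^ m / (1 - r ^ m) ≤ ∑ ℓ ∈ Finset.Icc 1 p, a ℓ ^ m := by
    rw [div_eq_mul_inv]
    apply le_of_tendsto htends
    filter_upwards [Filter.eventually_ge_atTop p] with N hN
    rw [← hgeom N]
    exact conv_step N hN
  constructor
  · rw [hsum_eq]; exact upper
  · rw [hsum_eq]; exact lower
end

section
/- Let p, q be integers with 1 ≤ q ≤ p − 1 and p ≥ 3. Then ∑_{ℓ=1}^{p−1} ℓ · ( C(p−1−ℓ, q−1)/C(p−1, q) )² ≥ (1/(2 (2 − q/p)²)) · p/(p−1). -/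
open Finset


lemma aux_sum_id (M : ℕ) : ∑ ℓ ∈ Icc 1 M, (ℓ:ℝ) = M*(M+1)/2 := by
  induction M with
  | zero => simp
  | succ M ih => rw [Finset.sum_Icc_succ_top (by omega), ih]; push_cast; ring

lemma aux_sum_sq (M : ℕ) : ∑ ℓ ∈ Icc 1 M, (ℓ:ℝ)^2 = M*(M+1)*(2*M+1)/6 := by
  induction M with
  | zero => simp
  | succ M ih => rw [Finset.sum_Icc_succ_top (by omega), ih]; push_cast; ring

lemma aux_sum_cube (M : ℕ) : ∑ ℓ ∈ Icc 1 M, (ℓ:ℝ)^3 = (M*(M+1)/2)^2 := by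
  induction M with
  | zero => simp
  | succ M ih => rw [Finset.sum_Icc_succ_top (by omega), ih]; push_cast; ring

lemma aux_sum_tentsq (M : ℕ) : ∑ ℓ ∈ Icc 1 M, (ℓ:ℝ)*((M:ℝ)-ℓ)^2 = (M:ℝ)^2*((M:ℝ)^2-1)/12 := by
  have : ∀ ℓ : ℕ, (ℓ:ℝ)*((M:ℝ)-ℓ)^2 = (M:ℝ)^2*(ℓ:ℝ) - 2*(M:ℝ)*(ℓ:ℝ)^2 + (ℓ:ℝ)^3 := by
    intro ℓ; ring
  rw [Finset.sum_congr rfl (fun ℓ _ => this ℓ)]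
  rw [Finset.sum_add_distrib, Finset.sum_sub_distrib, ← Finset.mul_sum, ← Finset.mul_sum,
    aux_sum_id, aux_sum_sq, aux_sum_cube]
  ring


lemma moment1 (N q' : ℕ) : ∀ M : ℕ, M ≤ N →
    ∑ ℓ ∈ Icc 1 M, (ℓ:ℝ) * ((N-ℓ).choose q' : ℝ)
      = ((N+1).choose (q'+2) : ℝ) - M * ((N-M).choose (q'+1) : ℝ) - ((N-M+1).choose (q'+2) : ℝ) := by
  intro M
  induction M with
  | zero => intro _; simp
  | succ M ih =>
    intro hM
    obtain ⟨j, hj⟩ : ∃ j, N - M = j + 1 := ⟨N - M - 1, by omega⟩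
    have e1 : N - (M+1) = j := by omega
    rw [Finset.sum_Icc_succ_top (by omega), ih (by omega), e1, hj]
    have p1 : (j + 1).choose (q'+1) = j.choose q' + j.choose (q'+1) :=
      Nat.choose_succ_succ' j q'
    have p2 : (j + 1 + 1).choose (q'+2) = (j+1).choose (q'+1) + (j+1).choose (q'+2) :=
      Nat.choose_succ_succ' (j+1) (q'+1)
    rw [p2, p1]
    push_cast
    ring

lemma moment_tent (N q' : ℕ) : ∀ M : ℕ, 1 ≤ M → M ≤ N →
    ∑ ℓ ∈ Icc 1 M, (ℓ:ℝ)*((M:ℝ)-ℓ) * ((N-ℓ).choose q' : ℝ)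
      = ((M:ℝ)-1) * ((N+1).choose (q'+2):ℝ) - 2*((N+1).choose (q'+3):ℝ)
        + ((M:ℝ)-1)*((N-M+1).choose (q'+2):ℝ) + 2*((N-M+2).choose (q'+3):ℝ) := by
  intro M
  induction M with
  | zero => intro h; omega
  | succ M ih =>
    intro _ hM
    rcases Nat.eq_zero_or_pos M with rfl | hM1
    · have e1 : N - 1 + 2 = N + 1 := by omega
      rw [e1]
      simp
    · obtain ⟨j, hj⟩ : ∃ j, N - M = j + 1 := ⟨N - M - 1, by omega⟩
      have e1 : N - (M+1) = j := by omega
      have split : ∑ ℓ ∈ Icc 1 (M+1), (ℓ:ℝ)*(((M:ℝ)+1)-ℓ) * ((N-ℓ).choose q' : ℝ)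
          = (∑ ℓ ∈ Icc 1 (M+1), (ℓ:ℝ)*((M:ℝ)-ℓ) * ((N-ℓ).choose q' : ℝ))
            + ∑ ℓ ∈ Icc 1 (M+1), (ℓ:ℝ) * ((N-ℓ).choose q' : ℝ) := by
        rw [← Finset.sum_add_distrib]
        apply Finset.sum_congr rfl; intro ℓ _; push_cast; ring
      have push : ((M+1 : ℕ) : ℝ) = (M:ℝ)+1 := by push_cast; ring
      rw [push, split, Finset.sum_Icc_succ_top (by omega), ih hM1 (by omega),
        moment1 N q' (M+1) hM, e1, hj]
      have p1 : (j + 1).choose (q'+1) = j.choose q' + j.choose (q'+1) :=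
        Nat.choose_succ_succ' j q'
      have p2 : (j + 1 + 1).choose (q'+2) = (j+1).choose (q'+1) + (j+1).choose (q'+2) :=
        Nat.choose_succ_succ' (j+1) (q'+1)
      have p3 : (j + 1 + 2).choose (q'+3) = (j+2).choose (q'+2) + (j+2).choose (q'+3) :=
        Nat.choose_succ_succ' (j+2) (q'+2)
      have p4 : (j + 2).choose (q'+2) = (j+1).choose (q'+1) + (j+1).choose (q'+2) :=
        Nat.choose_succ_succ' (j+1) (q'+1)
      have p5 : (j + 2).choose (q'+3) = (j+1).choose (q'+2) + (j+1).choose (q'+3) :=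
        Nat.choose_succ_succ' (j+1) (q'+2)
      have p6 : (j + 1).choose (q'+2) = j.choose (q'+1) + j.choose (q'+2) :=
        Nat.choose_succ_succ' j (q'+1)
      rw [p3, p4, p5, p1]
      push_cast
      ring

lemma core (N q' M : ℕ) (hq : q'+1 ≤ N) (hM2 : 2 ≤ M) (hMN : M ≤ N)
    (hX : 0 ≤ ((M:ℝ)-1)*((q':ℝ)+3) - 2*((N:ℝ)-(q':ℝ)-1)) :
    ((N:ℝ)+1)^2 * (((M:ℝ)-1)*((q':ℝ)+3) - 2*((N:ℝ)-(q':ℝ)-1))^2 * 12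
      / (((q':ℝ)+2)^2*((q':ℝ)+3)^2*((M:ℝ)^2*((M:ℝ)^2-1)))
    ≤ ∑ ℓ ∈ Icc 1 N, (ℓ:ℝ) * (((N-ℓ).choose q' : ℝ)/(N.choose (q'+1):ℝ))^2 := by
  set a : ℝ := (q':ℝ)+2 with hadef
  set b : ℝ := (q':ℝ)+3 with hbdef
  have hab : (0:ℝ) < a*b := by positivity
  have ha0 : (0:ℝ) < a := by rw [hadef]; positivity
  have hb0 : (0:ℝ) < b := by rw [hbdef]; positivity
  set X : ℝ := ((M:ℝ)-1)*b - 2*((N:ℝ)-(q':ℝ)-1) with hXdef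
  set C : ℝ := (N.choose (q'+1) : ℝ) with hCdef
  have hC : (0:ℝ) < C := by
    rw [hCdef]
    exact_mod_cast Nat.choose_pos hq
  set S : ℝ := ∑ ℓ ∈ Icc 1 N, (ℓ:ℝ) * (((N-ℓ).choose q' : ℝ)/C)^2 with hSdef
  have hS0 : 0 ≤ S := by
    rw [hSdef]; apply Finset.sum_nonneg; intro ℓ _; positivity
  have hM1R : (1:ℝ) ≤ (M:ℝ) := by exact_mod_cast (by omega : 1 ≤ M)
  have hM2R : (2:ℝ) ≤ (M:ℝ) := by exact_mod_cast hM2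
  -- Cauchy-Schwarz
  have cs := Finset.sum_mul_sq_le_sq_mul_sq (Icc 1 M)
    (fun ℓ => Real.sqrt ℓ * ((N-ℓ).choose q' : ℝ))
    (fun ℓ => Real.sqrt ℓ * ((M:ℝ)-ℓ))
  have hfg : ∀ ℓ ∈ Icc 1 M,
      (Real.sqrt ℓ * ((N-ℓ).choose q' : ℝ)) * (Real.sqrt ℓ * ((M:ℝ)-ℓ))
        = (ℓ:ℝ)*((M:ℝ)-ℓ) * ((N-ℓ).choose q' : ℝ) := by
    intro ℓ _
    have h : Real.sqrt ℓ * Real.sqrt ℓ = (ℓ:ℝ) := Real.mul_self_sqrt (by positivity)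
    linear_combination (((N-ℓ).choose q' : ℝ)*((M:ℝ)-ℓ)) * h
  have hf2 : ∀ ℓ ∈ Icc 1 M,
      (Real.sqrt ℓ * ((N-ℓ).choose q' : ℝ))^2 = (ℓ:ℝ) * ((N-ℓ).choose q' : ℝ)^2 := by
    intro ℓ _
    rw [mul_pow, Real.sq_sqrt (by positivity)]
  have hg2 : ∀ ℓ ∈ Icc 1 M,
      (Real.sqrt ℓ * ((M:ℝ)-ℓ))^2 = (ℓ:ℝ) * ((M:ℝ)-ℓ)^2 := by
    intro ℓ _
    rw [mul_pow, Real.sq_sqrt (by positivity)]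
  rw [Finset.sum_congr rfl hfg, Finset.sum_congr rfl hf2, Finset.sum_congr rfl hg2,
    aux_sum_tentsq M] at cs
  -- tent moment and positivity of boundary terms
  have hT := moment_tent N q' M (by omega) hMN
  set T : ℝ := ∑ ℓ ∈ Icc 1 M, (ℓ:ℝ)*((M:ℝ)-ℓ) * ((N-ℓ).choose q' : ℝ) with hTdef
  set V : ℝ := ((M:ℝ)-1) * ((N+1).choose (q'+2):ℝ) - 2*((N+1).choose (q'+3):ℝ) with hVdef
  clear_value a b X C S T V
  have hTV : V ≤ T := by
    rw [hT]
    have h1 : (0:ℝ) ≤ ((M:ℝ)-1)*((N-M+1).choose (q'+2):ℝ) :=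
      mul_nonneg (by linarith) (by positivity)
    have h2 : (0:ℝ) ≤ 2*((N-M+2).choose (q'+3):ℝ) := by positivity
    rw [hVdef]; linarith
  -- choose ratio identities
  have r1 : ((N+1).choose (q'+2) : ℝ) * a = ((N:ℝ)+1) * C := by
    have h := Nat.add_one_mul_choose_eq N (q'+1)
    have h' := congrArg (fun n : ℕ => (n:ℝ)) h
    push_cast at h'
    rw [hadef, hCdef]; push_cast; linarith
  have r2 : ((N+1).choose (q'+3) : ℝ) * b = ((N:ℝ)+1) * (N.choose (q'+2):ℝ) := by
    have h := Nat.add_one_mul_choose_eq N (q'+2)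
    have h' := congrArg (fun n : ℕ => (n:ℝ)) h
    push_cast at h'
    rw [hbdef]; push_cast; linarith
  have r3 : (N.choose (q'+2):ℝ) * a = C * ((N:ℝ)-(q':ℝ)-1) := by
    have h := Nat.choose_succ_right_eq N (q'+1)
    have h' := congrArg (fun n : ℕ => (n:ℝ)) h
    push_cast [Nat.cast_sub hq] at h'
    rw [hadef, hCdef]; push_cast; linarith
  have hVeq : V * (a*b) = C*((N:ℝ)+1)*X := by
    rw [hVdef, hXdef]
    linear_combination (((M:ℝ)-1)*b)*r1 - 2*a*r2 - 2*((N:ℝ)+1)*r3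
  have hV0 : 0 ≤ V := by
    have h0 : 0 ≤ V * (a*b) := by
      rw [hVeq]
      exact mul_nonneg (mul_nonneg hC.le (by positivity)) hX
    exact nonneg_of_mul_nonneg_right (by linear_combination h0) hab
  -- restriction of the square sum
  have hsub : ∑ ℓ ∈ Icc 1 M, (ℓ:ℝ) * ((N-ℓ).choose q' : ℝ)^2 ≤ C^2 * S := by
    have h1 : ∑ ℓ ∈ Icc 1 M, (ℓ:ℝ) * ((N-ℓ).choose q' : ℝ)^2
        ≤ ∑ ℓ ∈ Icc 1 N, (ℓ:ℝ) * ((N-ℓ).choose q' : ℝ)^2 := by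
      apply Finset.sum_le_sum_of_subset_of_nonneg (Finset.Icc_subset_Icc_right hMN)
      intro ℓ _ _; positivity
    have h2 : C^2 * S = ∑ ℓ ∈ Icc 1 N, (ℓ:ℝ) * ((N-ℓ).choose q' : ℝ)^2 := by
      rw [hSdef, Finset.mul_sum]
      apply Finset.sum_congr rfl
      intro ℓ _
      field_simp
    linarith
  -- combine
  have hVT2 : V^2 ≤ T^2 := pow_le_pow_left₀ hV0 hTV 2
  have hDpos : (0:ℝ) < (M:ℝ)^2*((M:ℝ)^2-1) := by
    have h1 : (0:ℝ) < (M:ℝ)^2 := by positivity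
    have h2 : (0:ℝ) < (M:ℝ)^2-1 := by nlinarith [hM2R, h1]
    exact mul_pos h1 h2
  have h12 : 12*V^2 ≤ C^2*S*((M:ℝ)^2*((M:ℝ)^2-1)) := by
    have hD12 : (0:ℝ) ≤ (M:ℝ)^2*((M:ℝ)^2-1)/12 := by linarith [hDpos]
    have step : T^2 ≤ C^2*S*((M:ℝ)^2*((M:ℝ)^2-1)/12) :=
      le_trans cs (mul_le_mul_of_nonneg_right hsub hD12)
    have hEq : C^2*S*((M:ℝ)^2*((M:ℝ)^2-1)/12)*12 = C^2*S*((M:ℝ)^2*((M:ℝ)^2-1)) := by ring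
    linarith [step, hVT2, hEq]
  have hsq : V^2*(a*b)^2 = C^2*(((N:ℝ)+1)^2*X^2) := by
    linear_combination (V*(a*b) + C*((N:ℝ)+1)*X) * hVeq
  have hden : (0:ℝ) < a^2*b^2*((M:ℝ)^2*((M:ℝ)^2-1)) :=
    mul_pos (mul_pos (pow_pos ha0 2) (pow_pos hb0 2)) hDpos
  rw [div_le_iff₀ hden]
  have key2 : ((N:ℝ)+1)^2*X^2*12*C^2 ≤ S*(a^2*b^2*((M:ℝ)^2*((M:ℝ)^2-1)))*C^2 := by
    calc ((N:ℝ)+1)^2*X^2*12*C^2 = 12*V^2*(a*b)^2 := by linear_combination (-12)*hsq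
      _ ≤ (C^2*S*((M:ℝ)^2*((M:ℝ)^2-1)))*(a*b)^2 :=
          mul_le_mul_of_nonneg_right h12 (sq_nonneg (a*b))
      _ = S*(a^2*b^2*((M:ℝ)^2*((M:ℝ)^2-1)))*C^2 := by ring
  exact le_of_mul_le_mul_right key2 (pow_pos hC 2)


lemma key_ineq (a d e : ℝ) (hd : 0 ≤ d) (he : 0 ≤ e) (hea : e ≤ a) (hh : a ≤ 4*d + e) :
    (a+4*d+e)^2*((4*d+e)*(2*a+4*d+e)) ≤ 24*(2*d+e)^2*(a+2*d)^2 := by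
  nlinarith [mul_nonneg hd he, sq_nonneg (a-2*d), sq_nonneg (a-4*d-e), mul_nonneg (sub_nonneg.2 hea) (sub_nonneg.2 hh), mul_nonneg hd hd, mul_nonneg he he, sq_nonneg (2*d+e), mul_nonneg (mul_nonneg hd hd) hd, mul_nonneg (mul_nonneg he he) he, mul_nonneg (mul_nonneg hd hd) he, mul_nonneg (mul_nonneg hd he) he, mul_nonneg (sub_nonneg.2 hea) hd, mul_nonneg (sub_nonneg.2 hh) hd, mul_nonneg (sub_nonneg.2 hea) he, mul_nonneg (sub_nonneg.2 hh) he]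

lemma case3 (A D E P M X : ℝ) (hA : 5 ≤ A) (hD : 0 ≤ D) (hE1 : 1 ≤ E) (hE2 : E ≤ A)
    (hDE : A ≤ 4*D+E) (hAM : A*M = A+4*D+E) (hX : X = 2*D+E) (hP : P = D+A-1) :
    P^3/(2*(2*P-(A-2))^2*(D+A-2)) ≤ P^2*X^2*12/((A-1)^2*A^2*(M^2*(M^2-1))) := by
  subst hP hX
  have hM2 : (2:ℝ) ≤ M := by
    have h : A*2 ≤ A*M := by rw [hAM]; linarith
    exact le_of_mul_le_mul_left h (by linarith)
  have h4 : (4:ℝ) ≤ M^2 := by nlinarith [sq_nonneg (M-2)]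
  have hMpos : (0:ℝ) < M^2*(M^2-1) := mul_pos (by linarith) (by linarith)
  have pos1 : (0:ℝ) < 2*(2*(D+A-1)-(A-2))^2*(D+A-2) := by
    have h1 : 2*(D+A-1)-(A-2) = A+2*D := by ring
    rw [h1]
    have : (0:ℝ) < (A+2*D)^2 := by positivity
    nlinarith
  have pos2 : (0:ℝ) < (A-1)^2*A^2*(M^2*(M^2-1)) := by
    have h1 : (0:ℝ) < (A-1)^2 := by nlinarith
    have h2 : (0:ℝ) < A^2 := by nlinarith
    exact mul_pos (mul_pos h1 h2) hMpos
  rw [div_le_div_iff₀ pos1 pos2]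
  rw [← mul_le_mul_iff_of_pos_right (show (0:ℝ) < A^2 by nlinarith)]
  have s1 : (D+A-1)*(A-1)^2 ≤ (D+A-2)*A^2 := by nlinarith
  have s2 : (A+4*D+E)^2*((A+4*D+E)^2-A^2) ≤ 24*(2*D+E)^2*(A+2*D)^2 := by
    have h := key_ineq A D E hD (by linarith) hE2 hDE
    calc (A+4*D+E)^2*((A+4*D+E)^2-A^2)
        = (A+4*D+E)^2*((4*D+E)*(2*A+4*D+E)) := by ring
      _ ≤ 24*(2*D+E)^2*(A+2*D)^2 := h
  have nn2 : (0:ℝ) ≤ (A+4*D+E)^2*((A+4*D+E)^2-A^2) := by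
    have h1 : (0:ℝ) ≤ (4*D+E)*(2*A+4*D+E) := by nlinarith
    nlinarith [sq_nonneg (A+4*D+E)]
  have nnb : (0:ℝ) ≤ (D+A-2)*A^2 := by nlinarith
  calc (D+A-1)^3*((A-1)^2*A^2*(M^2*(M^2-1)))*A^2
      = ((D+A-1)^2) * ( ((D+A-1)*(A-1)^2) * ((A*M)^2*((A*M)^2 - A^2)) ) := by ring
    _ = ((D+A-1)^2) * ( ((D+A-1)*(A-1)^2) * ((A+4*D+E)^2*((A+4*D+E)^2-A^2)) ) := by rw [hAM]
    _ ≤ ((D+A-1)^2) * ( ((D+A-2)*A^2) * (24*(2*D+E)^2*(A+2*D)^2) ) := by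
        apply mul_le_mul_of_nonneg_left _ (sq_nonneg _)
        exact mul_le_mul s1 s2 nn2 nnb
    _ = (D+A-1)^2*(2*D+E)^2*12*(2*(2*(D+A-1)-(A-2))^2*(D+A-2))*A^2 := by ring

lemma case1 (n : ℝ) (hn : 3 ≤ n) :
    (n+1)^3/(2*(2*(n+1)-1)^2*n) ≤ (n+1)^2*((n-1)*3-2*(n-1))^2*12/(2^2*3^2*(n^2*(n^2-1))) := by
  have pos1 : (0:ℝ) < 2*(2*(n+1)-1)^2*n := by nlinarith [sq_nonneg (2*n+1)]
  have pos2 : (0:ℝ) < 2^2*3^2*(n^2*(n^2-1)) := by nlinarith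
  rw [div_le_div_iff₀ pos1 pos2]
  nlinarith [sq_nonneg (n-3), sq_nonneg n, hn, mul_nonneg (sub_nonneg.2 hn) (sq_nonneg n), mul_nonneg (mul_nonneg (sub_nonneg.2 hn) (sub_nonneg.2 hn)) (sq_nonneg n), mul_nonneg (sub_nonneg.2 hn) (sq_nonneg (n-3)), mul_nonneg (mul_nonneg (sub_nonneg.2 hn) (sub_nonneg.2 hn)) (sq_nonneg (n-3))]

lemma case2 (n : ℝ) (hn : 2 ≤ n) :
    (n+1)^3/(2*(2*(n+1)-2)^2*n) ≤ (n+1)^2*((n-1)*4-2*(n-2))^2*12/(3^2*4^2*(n^2*(n^2-1))) := by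
  have pos1 : (0:ℝ) < 2*(2*(n+1)-2)^2*n := by nlinarith
  have pos2 : (0:ℝ) < 3^2*4^2*(n^2*(n^2-1)) := by nlinarith
  rw [div_le_div_iff₀ pos1 pos2]
  nlinarith [sq_nonneg (n-2), sq_nonneg n, hn, mul_nonneg (sub_nonneg.2 hn) (sq_nonneg n), mul_nonneg (mul_nonneg (sub_nonneg.2 hn) (sub_nonneg.2 hn)) (sq_nonneg n), mul_nonneg (sub_nonneg.2 hn) (sq_nonneg (n-2)), mul_nonneg (mul_nonneg (sub_nonneg.2 hn) (sub_nonneg.2 hn)) (sq_nonneg (n-2))]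

/-- Lemma 6 (lower bound for the weighted sum of squared hypergeometric-type weights). -/
theorem stmt_17 (p q : ℕ) (hp3 : 3 ≤ p) (hq : 1 ≤ q) (hqp : q ≤ p - 1) :
    1 / (2 * (2 - (q : ℝ) / p) ^ 2) * ((p : ℝ) / ((p : ℝ) - 1))
      ≤ ∑ ℓ ∈ Finset.Icc 1 (p - 1),
          (ℓ : ℝ) * (((p - 1 - ℓ).choose (q - 1) : ℝ) / ((p - 1).choose q : ℝ)) ^ 2 := by
  obtain ⟨N, rfl⟩ : ∃ N, p = N + 1 := ⟨p-1, by omega⟩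
  obtain ⟨q', rfl⟩ : ∃ q', q = q' + 1 := ⟨q-1, by omega⟩
  have hN2 : 2 ≤ N := by omega
  have hqN : q' + 1 ≤ N := by omega
  have hNR : (2:ℝ) ≤ (N:ℝ) := by exact_mod_cast hN2
  have hqNR : (q':ℝ) + 1 ≤ (N:ℝ) := by exact_mod_cast hqN
  simp only [Nat.add_sub_cancel]
  have hcast : ((N+1 : ℕ) : ℝ) = (N:ℝ)+1 := by push_cast; ring
  have hcast2 : ((q'+1 : ℕ) : ℝ) = (q':ℝ)+1 := by push_cast; ring
  rw [hcast, hcast2]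
  have tgt_eq : 1/(2*(2 - ((q':ℝ)+1)/((N:ℝ)+1))^2)*(((N:ℝ)+1)/(((N:ℝ)+1)-1))
      = ((N:ℝ)+1)^3/(2*(2*((N:ℝ)+1)-((q':ℝ)+1))^2*(N:ℝ)) := by
    have h1 : (2:ℝ) - ((q':ℝ)+1)/((N:ℝ)+1) = (2*((N:ℝ)+1)-((q':ℝ)+1))/((N:ℝ)+1) := by
      field_simp
    rw [h1]
    have h2 : (0:ℝ) < 2*((N:ℝ)+1)-((q':ℝ)+1) := by linarith
    have hN0 : (N:ℝ) ≠ 0 := (by linarith : (0:ℝ) < N).ne'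
    field_simp
    ring_nf
    exact mul_inv_cancel₀ hN0
  rw [tgt_eq]
  by_cases hq'0 : q' = 0
  · subst hq'0
    rcases Nat.lt_or_ge N 3 with hN3 | hN3
    · -- N = 2 : direct computation
      have hN2' : N = 2 := by omega
      subst hN2'
      norm_num
      rw [show (Finset.Icc 1 2 : Finset ℕ) = {1, 2} by rfl]
      rw [Finset.sum_insert (by decide), Finset.sum_singleton]
      norm_num [Nat.choose]
    · have hN3R : (3:ℝ) ≤ (N:ℝ) := by exact_mod_cast hN3
      have hX : (0:ℝ) ≤ ((N:ℝ)-1)*(((0:ℕ):ℝ)+3) - 2*((N:ℝ)-((0:ℕ):ℝ)-1) := by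
        push_cast; nlinarith
      calc ((N:ℝ)+1)^3/(2*(2*((N:ℝ)+1)-(((0:ℕ):ℝ)+1))^2*(N:ℝ))
          = ((N:ℝ)+1)^3/(2*(2*((N:ℝ)+1)-1)^2*(N:ℝ)) := by push_cast; ring
        _ ≤ ((N:ℝ)+1)^2*(((N:ℝ)-1)*3-2*((N:ℝ)-1))^2*12/(2^2*3^2*((N:ℝ)^2*((N:ℝ)^2-1))) :=
            case1 (N:ℝ) hN3R
        _ = ((N:ℝ)+1)^2 * (((N:ℝ)-1)*(((0:ℕ):ℝ)+3) - 2*((N:ℝ)-((0:ℕ):ℝ)-1))^2 * 12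
              / ((((0:ℕ):ℝ)+2)^2*(((0:ℕ):ℝ)+3)^2*((N:ℝ)^2*((N:ℝ)^2-1))) := by push_cast; ring
        _ ≤ _ := core N 0 N hqN hN2 le_rfl hX
  by_cases hq'1 : q' = 1
  · subst hq'1
    have hX : (0:ℝ) ≤ ((N:ℝ)-1)*(((1:ℕ):ℝ)+3) - 2*((N:ℝ)-((1:ℕ):ℝ)-1) := by
      push_cast; nlinarith
    calc ((N:ℝ)+1)^3/(2*(2*((N:ℝ)+1)-(((1:ℕ):ℝ)+1))^2*(N:ℝ))
        = ((N:ℝ)+1)^3/(2*(2*((N:ℝ)+1)-2)^2*(N:ℝ)) := by push_cast; ring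
      _ ≤ ((N:ℝ)+1)^2*(((N:ℝ)-1)*4-2*((N:ℝ)-2))^2*12/(3^2*4^2*((N:ℝ)^2*((N:ℝ)^2-1))) :=
          case2 (N:ℝ) hNR
      _ = ((N:ℝ)+1)^2 * (((N:ℝ)-1)*(((1:ℕ):ℝ)+3) - 2*((N:ℝ)-((1:ℕ):ℝ)-1))^2 * 12
            / ((((1:ℕ):ℝ)+2)^2*(((1:ℕ):ℝ)+3)^2*((N:ℝ)^2*((N:ℝ)^2-1))) := by push_cast; ring
      _ ≤ _ := core N 1 N hqN hN2 le_rfl hX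
  -- q' ≥ 2
  have hq2 : 2 ≤ q' := by omega
  have hq2R : (2:ℝ) ≤ (q':ℝ) := by exact_mod_cast hq2
  set d : ℕ := N - (q'+1) with hddef
  set K : ℕ := 4*d/(q'+3) with hKdef
  set r : ℕ := 4*d % (q'+3) with hrdef
  have hdm : (q'+3)*K + r = 4*d := Nat.div_add_mod (4*d) (q'+3)
  have hr : r < q'+3 := Nat.mod_lt _ (by omega)
  have hrd : r ≤ 4*d := Nat.mod_le _ _
  have hKd : (q'+3)*K ≤ 4*d := hdm ▸ Nat.le_add_right _ _
  have h5K : 5*K ≤ 4*d := le_trans (Nat.mul_le_mul_right K (by omega : 5 ≤ q'+3)) hKd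
  have hKled : K ≤ d := by omega
  set M : ℕ := K + 2 with hMdef
  have hM2 : 2 ≤ M := by omega
  have hMN : M ≤ N := by omega
  -- real facts
  have hDd : ((d:ℕ):ℝ) = (N:ℝ)-(q':ℝ)-1 := by
    rw [hddef]
    push_cast [Nat.cast_sub hqN]
    ring
  have hdmR : ((q':ℝ)+3)*(K:ℝ) + (r:ℝ) = 4*(d:ℝ) := by exact_mod_cast hdm
  have hrR : (r:ℝ) ≤ (q':ℝ)+2 := by exact_mod_cast (by omega : r ≤ q'+2)
  have hr0 : (0:ℝ) ≤ (r:ℝ) := by positivity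
  have hrdR : (r:ℝ) ≤ 4*(d:ℝ) := by exact_mod_cast hrd
  have hAM : ((q':ℝ)+3)*((M:ℕ):ℝ) = ((q':ℝ)+3)+4*((N:ℝ)-(q':ℝ)-1)+(((q':ℝ)+3)-(r:ℝ)) := by
    rw [hMdef]
    push_cast
    linear_combination hdmR + 4*hDd
  have hD0 : (0:ℝ) ≤ (N:ℝ)-(q':ℝ)-1 := by linarith
  have hE1 : (1:ℝ) ≤ ((q':ℝ)+3)-(r:ℝ) := by linarith
  have hE2 : ((q':ℝ)+3)-(r:ℝ) ≤ (q':ℝ)+3 := by linarith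
  have hDE : (q':ℝ)+3 ≤ 4*((N:ℝ)-(q':ℝ)-1)+(((q':ℝ)+3)-(r:ℝ)) := by
    have : 4*(d:ℝ) = 4*((N:ℝ)-(q':ℝ)-1) := by linarith [hDd]
    linarith
  have hA5 : (5:ℝ) ≤ (q':ℝ)+3 := by linarith
  have hXX : ((M:ℝ)-1)*((q':ℝ)+3) - 2*((N:ℝ)-(q':ℝ)-1)
      = 2*((N:ℝ)-(q':ℝ)-1)+(((q':ℝ)+3)-(r:ℝ)) := by
    linear_combination hAM
  have hXnn : (0:ℝ) ≤ ((M:ℝ)-1)*((q':ℝ)+3) - 2*((N:ℝ)-(q':ℝ)-1) := by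
    rw [hXX]; linarith
  have hcore := core N q' M hqN hM2 hMN hXnn
  rw [hXX] at hcore
  have hc3 := case3 ((q':ℝ)+3) ((N:ℝ)-(q':ℝ)-1) (((q':ℝ)+3)-(r:ℝ)) ((N:ℝ)+1) ((M:ℕ):ℝ)
    (2*((N:ℝ)-(q':ℝ)-1)+(((q':ℝ)+3)-(r:ℝ))) hA5 hD0 hE1 hE2 hDE hAM rfl (by ring)
  calc ((N:ℝ)+1)^3/(2*(2*((N:ℝ)+1)-((q':ℝ)+1))^2*(N:ℝ))
      = ((N:ℝ)+1)^3/(2*(2*((N:ℝ)+1)-(((q':ℝ)+3)-2))^2*(((N:ℝ)-(q':ℝ)-1)+((q':ℝ)+3)-2)) := by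
        ring_nf
    _ ≤ ((N:ℝ)+1)^2*(2*((N:ℝ)-(q':ℝ)-1)+(((q':ℝ)+3)-(r:ℝ)))^2*12
          / ((((q':ℝ)+3)-1)^2*((q':ℝ)+3)^2*(((M:ℕ):ℝ)^2*(((M:ℕ):ℝ)^2-1))) := hc3
    _ = ((N:ℝ)+1)^2*(2*((N:ℝ)-(q':ℝ)-1)+(((q':ℝ)+3)-(r:ℝ)))^2*12
          / (((q':ℝ)+2)^2*((q':ℝ)+3)^2*(((M:ℕ):ℝ)^2*(((M:ℕ):ℝ)^2-1))) := by ring_nf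
    _ ≤ _ := hcore
end

section
/- For every real number a ∈ [0,1] and every integer ℓ ≥ 2, (1/ℓ!) ∏_{j=0}^{ℓ−1} (a + j) ≤ a e^a / ℓ^{1−a}. (The left-hand side equals |κ^{(ℓ)}(1)| / ℓ! for the function κ(δ) = δ^{−a}.) -/
open Finset

/-- Lemma 7 (bound on the Taylor coefficients of `κ(δ) = δ^{-a}` at `1`):
`|κ^{(ℓ)}(1)|/ℓ! = a(a+1)⋯(a+ℓ−1)/ℓ! ≤ a e^a / ℓ^{1−a}`. -/
theorem stmt_18 (a : ℝ) (ha0 : 0 ≤ a) (ha1 : a ≤ 1) (ℓ : ℕ) (hℓ : 2 ≤ ℓ) :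
    (∏ j ∈ Finset.range ℓ, (a + (j : ℝ))) / (Nat.factorial ℓ : ℝ)
      ≤ a * Real.exp a / (ℓ : ℝ) ^ (1 - a) := by
  obtain ⟨m, rfl⟩ : ∃ m, ℓ = m + 1 := ⟨ℓ - 1, by omega⟩
  have hm : 1 ≤ m := by omega
  have hL : (0:ℝ) < ((m + 1 : ℕ) : ℝ) := by positivity
  have hfm : (0:ℝ) < (Nat.factorial m : ℝ) := by positivity
  -- key bound on the shifted product
  have key : ∏ j ∈ Finset.range m, (a + ((j + 1 : ℕ) : ℝ))
      ≤ (Nat.factorial m : ℝ) * Real.exp (a * (harmonic m : ℝ)) := by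
    calc ∏ j ∈ Finset.range m, (a + ((j + 1 : ℕ) : ℝ))
        ≤ ∏ j ∈ Finset.range m, (((j + 1 : ℕ) : ℝ) * Real.exp (a / ((j + 1 : ℕ) : ℝ))) := by
          apply Finset.prod_le_prod
          · intro j _; positivity
          · intro j _
            have hj : (0:ℝ) < ((j + 1 : ℕ) : ℝ) := by positivity
            rw [mul_comm]
            calc a + ((j + 1 : ℕ) : ℝ) = (a / ((j + 1 : ℕ) : ℝ) + 1) * ((j + 1 : ℕ) : ℝ) := by
                  field_simp
              _ ≤ Real.exp (a / ((j + 1 : ℕ) : ℝ)) * ((j + 1 : ℕ) : ℝ) := by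
                  gcongr
                  exact Real.add_one_le_exp _
      _ = (Nat.factorial m : ℝ) * Real.exp (a * (harmonic m : ℝ)) := by
          rw [Finset.prod_mul_distrib, ← Real.exp_sum]
          congr 1
          · rw [← Nat.cast_prod, Finset.prod_range_add_one_eq_factorial]
          · congr 1
            rw [harmonic]
            push_cast
            rw [Finset.mul_sum]
            refine Finset.sum_congr rfl fun j _ => ?_
            rw [div_eq_mul_inv]
      -- end
  have hH : (harmonic m : ℝ) ≤ 1 + Real.log ((m + 1 : ℕ) : ℝ) := by
    refine (harmonic_le_one_add_log m).trans ?_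
    have h0 : (0:ℝ) < (m : ℝ) := by exact_mod_cast hm
    have := Real.log_le_log h0 (show (m:ℝ) ≤ ((m+1:ℕ):ℝ) by push_cast; linarith)
    linarith
  have hexp : Real.exp (a * (harmonic m : ℝ))
      ≤ Real.exp a * ((m + 1 : ℕ) : ℝ) ^ a := by
    have h1 : a * (harmonic m : ℝ) ≤ a + a * Real.log ((m + 1 : ℕ) : ℝ) := by
      nlinarith [hH, ha0]
    calc Real.exp (a * (harmonic m : ℝ)) ≤ Real.exp (a + a * Real.log ((m + 1 : ℕ) : ℝ)) :=
          Real.exp_le_exp.mpr h1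
      _ = Real.exp a * ((m + 1 : ℕ) : ℝ) ^ a := by
          rw [Real.exp_add, Real.rpow_def_of_pos hL, mul_comm a]
  have hprod : ∏ j ∈ Finset.range m, (a + ((j + 1 : ℕ) : ℝ))
      ≤ (Nat.factorial m : ℝ) * (Real.exp a * ((m + 1 : ℕ) : ℝ) ^ a) := by
    refine key.trans ?_
    gcongr
  have hpos : (0:ℝ) < ((m + 1 : ℕ) : ℝ) ^ a := Real.rpow_pos_of_pos hL a
  rw [Finset.prod_range_succ']
  push_cast
  rw [Nat.factorial_succ]
  push_cast
  have hrw : a * Real.exp a / ((m : ℝ) + 1) ^ (1 - a)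
      = a * Real.exp a * ((m : ℝ) + 1) ^ a / ((m : ℝ) + 1) := by
    rw [Real.rpow_sub (by push_cast at hL ⊢; linarith), Real.rpow_one, div_div_eq_mul_div]
  rw [hrw]
  have hp' : ∏ j ∈ Finset.range m, (a + ((j : ℝ) + 1))
      ≤ (Nat.factorial m : ℝ) * (Real.exp a * ((m : ℝ) + 1) ^ a) := by
    convert hprod using 3 <;> push_cast <;> ring
  calc (∏ j ∈ Finset.range m, (a + ((j : ℝ) + 1))) * (a + 0) / (((m : ℝ) + 1) * (Nat.factorial m : ℝ))
      ≤ ((Nat.factorial m : ℝ) * (Real.exp a * ((m : ℝ) + 1) ^ a)) * a / (((m : ℝ) + 1) * (Nat.factorial m : ℝ)) := by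
        rw [add_zero]
        gcongr
        all_goals first
          | exact hp'
          | positivity
          | exact Finset.prod_nonneg fun j _ => by positivity
    _ = a * Real.exp a * ((m : ℝ) + 1) ^ a / ((m : ℝ) + 1) := by
        field_simp
end
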